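/- Let A ⊆ B be rings with A semilocal (A/rad A semisimple) and B finitely generated as a left A-module. Let 𝔞 be a two-sided ideal of A contained in rad A with B𝔞 ⊆ 𝔞B. Then 𝔞 ⊆ rad B. -/

import Mathlib

/-- A ring `A` is *semilocal* if `A / rad A` is semisimple, where `rad A` is the
Jacobson radical (the intersection of the maximal left ideals, `(⊥ : Ideal A).jacobson`).
Equivalently, `A / rad A` is semisimple as a left `A`-module. -/
def IsSemilocalRing (A : Type*) [Ring A] : Prop :=
  IsSemisimpleModule A (A ⧸ (⊥ : Ideal A).jacobson)

/-- The right multiples `𝔞B` of a two-sided ideal `𝔞` of a subring `A ⊆ B`,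
as an additive subgroup of `B`. -/
def idealRightMultiples {B : Type*} [Ring B] (A : Subring B) (a : Ideal A) : AddSubgroup B :=
  AddSubgroup.closure {z : B | ∃ x ∈ a, ∃ b : B, z = (x : B) * b}

section Nakayama

variable {A : Type*} [Ring A] {M : Type*} [AddCommGroup M] [Module A M]

/-- Noncommutative version of `Submodule.mem_smul_span_singleton`, assuming the ideal is
closed under right multiplication. -/
lemma mem_smul_span_singleton_of_twosided {I : Ideal A}
    (hI : ∀ x ∈ I, ∀ r : A, x * r ∈ I) {m x : M}
    (hx : x ∈ I • Submodule.span A ({m} : Set M)) : ∃ c ∈ I, c • m = x := by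
  refine Submodule.smul_induction_on hx ?_ ?_
  · intro r hr n hn
    obtain ⟨s, rfl⟩ := Submodule.mem_span_singleton.1 hn
    exact ⟨r * s, hI r hr s, (mul_smul r s m)⟩
  · rintro y z ⟨c, hc, rfl⟩ ⟨d, hd, rfl⟩
    exact ⟨c + d, I.add_mem hc hd, (add_smul c d m)⟩

/-- Noncommutative Nakayama lemma, span version. -/
lemma span_eq_bot_of_le_smul_of_le_jacobson {I : Ideal A}
    (hle : I ≤ (⊥ : Ideal A).jacobson) (hI : ∀ x ∈ I, ∀ r : A, x * r ∈ I)
    (s : Finset M)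
    (h : Submodule.span A (s : Set M) ≤ I • Submodule.span A (s : Set M)) :
    Submodule.span A (s : Set M) = ⊥ := by
  classical
  induction s using Finset.induction_on with
  | empty => simpa using h
  | insert y t hy ih =>
    have hyK : y ∈ Submodule.span A (t : Set M) := by
      have h1 : y ∈ I • (Submodule.span A ({y} : Set M) ⊔ Submodule.span A (t : Set M)) := by
        have := h (Submodule.subset_span (Finset.mem_coe.2 (Finset.mem_insert_self y t)))
        rwa [Finset.coe_insert, Submodule.span_insert] at this
      rw [Submodule.smul_sup] at h1
      obtain ⟨u, hu, z, hz, huz⟩ := Submodule.mem_sup.1 h1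
      obtain ⟨c, hc, rfl⟩ := mem_smul_span_singleton_of_twosided hI hu
      -- (1 - c) • y = z
      have hsub : (1 - c) • y = z := by
        rw [sub_smul, one_smul]
        exact (eq_sub_of_add_eq' huz).symm
      obtain ⟨w, hw⟩ := Ideal.mem_jacobson_iff.1 (hle hc) (-1)
      have h1 : w * -1 * c + w = 1 := by
        rwa [Ideal.mem_bot, sub_eq_zero] at hw
      have hw1 : w * (1 - c) = 1 := by
        have h2 : w * (1 - c) = w * -1 * c + w := by noncomm_ring
        rw [h2, h1]
      have : y = w • z := by
        calc y = (w * (1 - c)) • y := by rw [hw1, one_smul]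
        _ = w • ((1 - c) • y) := mul_smul _ _ _
        _ = w • z := by rw [hsub]
      rw [this]
      exact Submodule.smul_le_right (Submodule.smul_mem _ w hz)
    have hspan : Submodule.span A ((insert y t : Finset M) : Set M)
        = Submodule.span A (t : Set M) := by
      rw [Finset.coe_insert, Submodule.span_insert]
      refine le_antisymm (sup_le ?_ le_rfl) le_sup_right
      simpa [Submodule.span_le] using hyK
    rw [hspan] at h ⊢
    exact ih h

/-- Noncommutative Nakayama lemma. -/
lemma eq_bot_of_le_jacobson_smul {I : Ideal A}
    (hle : I ≤ (⊥ : Ideal A).jacobson) (hI : ∀ x ∈ I, ∀ r : A, x * r ∈ I)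
    (N : Submodule A M) (hfg : N.FG) (h : N ≤ I • N) : N = ⊥ := by
  obtain ⟨s, rfl⟩ := hfg
  exact span_eq_bot_of_le_smul_of_le_jacobson hle hI s h

end Nakayama

/-- Let `A ⊆ B` be rings with `A` semilocal and `B` finitely generated as a left
`A`-module.  Let `𝔞` be a two-sided ideal of `A` contained in `rad A` with
`B𝔞 ⊆ 𝔞B`.  Then `𝔞 ⊆ rad B`. -/
theorem subset_jacobson_of_semilocal
    (B : Type*) [Ring B] (A : Subring B)
    (hA : IsSemilocalRing A) [Module.Finite A B]
    (a : Ideal A)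
    (ha_rad : a ≤ (⊥ : Ideal A).jacobson)
    (ha_twosided : ∀ x ∈ a, ∀ r : A, x * r ∈ a)
    (hBa : ∀ (b : B), ∀ x ∈ a, b * (x : B) ∈ idealRightMultiples A a) :
    ∀ x ∈ a, (x : B) ∈ (⊥ : Ideal B).jacobson := by
  intro x hx
  -- the Jacobson radical of `A` is a two-sided ideal
  have hJ2 : ∀ c ∈ (⊥ : Ideal A).jacobson, ∀ r : A, c * r ∈ (⊥ : Ideal A).jacobson := by
    intro c hc r
    exact (⊥ : Ideal A).jacobson.mul_mem_right r hc
  have key : ∀ Mx : Ideal B, Mx.IsMaximal → (x : B) ∈ Mx := by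
    intro Mx hMx
    by_contra hxM
    obtain ⟨y, i, hi, hyi⟩ := hMx.exists_inv hxM
    -- `Mx` as an `A`-submodule of `B`
    let P : Submodule A B :=
      { carrier := (Mx : Set B)
        add_mem' := fun h1 h2 => Mx.add_mem h1 h2
        zero_mem' := Mx.zero_mem
        smul_mem' := fun c b hb => Mx.mul_mem_left (c : B) hb }
    have hPmem : ∀ b : B, b ∈ P ↔ b ∈ Mx := fun b => Iff.rfl
    -- elements of `aB` lie in `rad A • B`
    have hNsub : idealRightMultiples A a ≤
        ((⊥ : Ideal A).jacobson • (⊤ : Submodule A B)).toAddSubgroup := by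
      rw [idealRightMultiples, AddSubgroup.closure_le]
      rintro z ⟨x', hx', b, rfl⟩
      exact Submodule.smul_mem_smul (ha_rad hx') Submodule.mem_top
    -- every element of `B` decomposes
    have decomp : ∀ b : B, ∃ t ∈ (⊥ : Ideal A).jacobson • (⊤ : Submodule A B),
        ∃ p ∈ Mx, b = t + p := by
      intro b
      refine ⟨b * y * (x : B), hNsub (hBa (b * y) x hx), b * i, Mx.mul_mem_left b hi, ?_⟩
      calc b = b * (y * (x : B) + i) := by rw [hyi, mul_one]
      _ = b * y * (x : B) + b * i := by rw [mul_add, mul_assoc]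
    -- Nakayama on `B ⧸ P`
    have htop : (⊤ : Submodule A (B ⧸ P)) ≤
        (⊥ : Ideal A).jacobson • (⊤ : Submodule A (B ⧸ P)) := by
      intro v _
      obtain ⟨b, rfl⟩ := P.mkQ_surjective v
      obtain ⟨t, ht, p, hp, rfl⟩ := decomp b
      have hp0 : P.mkQ p = 0 := (Submodule.Quotient.mk_eq_zero P).2 hp
      rw [map_add, hp0, add_zero]
      have : P.mkQ t ∈ ((⊥ : Ideal A).jacobson • (⊤ : Submodule A B)).map P.mkQ :=
        Submodule.mem_map_of_mem ht
      rw [Submodule.map_smul''] at this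
      exact Submodule.smul_mono le_rfl le_top this
    have hbot : (⊤ : Submodule A (B ⧸ P)) = ⊥ :=
      eq_bot_of_le_jacobson_smul le_rfl hJ2 ⊤ Module.Finite.fg_top htop
    have h1P : (1 : B) ∈ Mx := by
      have : P.mkQ 1 = 0 := by
        have := (Submodule.eq_bot_iff _).1 hbot (P.mkQ 1) Submodule.mem_top
        exact this
      exact (Submodule.Quotient.mk_eq_zero P).1 this
    exact hMx.ne_top ((Ideal.eq_top_iff_one Mx).2 h1P)
  refine Submodule.mem_sInf.2 fun J hJ => key J hJ.2
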